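/- Let w_1, …, w_k ∈ ℝ² be k ≥ 2 points whose pairwise distances are all at least d, let r > 0 satisfy r < d/8, and let θ₁, θ₂, θ₃ be independent and uniformly distributed on [−π, π). Then the probability that some pair of the k points has projections within 2r of each other in some of the three scans is at most 2k²r/d; that is, P( ∃ t ∈ {1,2,3}, ∃ i ≠ j : |⟨u_{θₜ}^⊥, w_i − w_j⟩| < 2r ) ≤ 2k²r/d. -/

import Mathlib

noncomputable section
open MeasureTheory Real Set

/-- Probe direction `u_θ = (cos θ, sin θ)`. -/
def uvec (θ : ℝ) : ℝ × ℝ := (Real.cos θ, Real.sin θ)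

/-- Sweep direction `u_θ^⊥ = (sin θ, -cos θ)`. -/
def uperp (θ : ℝ) : ℝ × ℝ := (Real.sin θ, -Real.cos θ)

/-- Euclidean inner product on ℝ². -/
def dot2 (a b : ℝ × ℝ) : ℝ := a.1 * b.1 + a.2 * b.2

/-- Euclidean norm on ℝ². -/
def norm2 (a : ℝ × ℝ) : ℝ := Real.sqrt (a.1 ^ 2 + a.2 ^ 2)

/-- Line projection at angle θ: `L_θ[Y](t) = ∫ Y(s·u_θ + t·u_θ^⊥) ds`. -/
def lineProj (Y : ℝ × ℝ → ℝ) (θ t : ℝ) : ℝ := ∫ s : ℝ, Y (s • uvec θ + t • uperp θ)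

/-- Uniform probability measure on `[-π, π)`. -/
def unif : Measure ℝ :=
  (ENNReal.ofReal (1 / (2 * Real.pi))) • (volume.restrict (Set.Ico (-Real.pi) Real.pi))

lemma sin_lower {δ y : ℝ} (hδ : 0 < δ) (hδ2 : δ ≤ π / 2) (h1 : δ ≤ y) (h2 : y ≤ π - δ) :
    Real.sin δ ≤ Real.sin y := by
  have hπ := Real.pi_pos
  have hm1 : δ ∈ Icc (-(π / 2)) (π / 2) := ⟨by linarith, hδ2⟩
  rcases le_or_gt y (π / 2) with h | h
  · have hm2 : y ∈ Icc (-(π / 2)) (π / 2) := ⟨by linarith, h⟩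
    exact Real.strictMonoOn_sin.monotoneOn hm1 hm2 h1
  · rw [← Real.sin_pi_sub y]
    have hm2 : π - y ∈ Icc (-(π / 2)) (π / 2) := ⟨by linarith, by linarith⟩
    exact Real.strictMonoOn_sin.monotoneOn hm1 hm2 (by linarith)

lemma unif_single (v : ℝ × ℝ) (d r : ℝ) (hr : 0 < r) (hrd : r < d / 8) (hd : d ≤ norm2 v) :
    unif {θ : ℝ | |dot2 (uperp θ) v| < 2 * r} ≤ ENNReal.ofReal (4 * r / (3 * d)) := by
  have hπ := Real.pi_pos
  have hd0 : 0 < d := by linarith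
  set a : ℝ := 2 * r / d with ha_def
  have ha0 : 0 < a := by positivity
  have ha4 : a ≤ 1 / 4 := by
    rw [ha_def, div_le_div_iff₀ hd0 (by norm_num)]; linarith
  set δ : ℝ := π / 3 * a with hδ_def
  have hδ0 : 0 < δ := by positivity
  have hδsmall : δ ≤ π / 12 := by
    rw [hδ_def]; nlinarith
  have hδ1 : δ ≤ 1 := by nlinarith [Real.pi_le_four]
  have hδhalf : δ ≤ π / 2 := by nlinarith
  have hasin : a < Real.sin δ := by
    have h := Real.sin_gt_sub_cube hδ0
    have hc0 : π / 3 * a ≤ 4 / 3 * a := by nlinarith [Real.pi_le_four]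
    have hc1 : (π / 3 * a) ^ 3 ≤ (4 / 3 * a) ^ 3 := pow_le_pow_left₀ hδ0.le hc0 3
    have ha2 : a ^ 2 ≤ 1 / 16 := by nlinarith
    have ha3 : a ^ 3 ≤ a / 16 := by nlinarith [mul_le_mul_of_nonneg_left ha2 ha0.le]
    have hc2 : (4 / 3 * a) ^ 3 ≤ (4 / 3) ^ 3 * (a / 16) := by nlinarith [ha3]
    have hale : a ≤ δ - δ ^ 3 / 4 := by
      rw [hδ_def]
      nlinarith [Real.pi_gt_d6]
    linarith [pow_pos hδ0 3]
  -- complex representation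
  have hN0 : 0 < norm2 v := lt_of_lt_of_le hd0 hd
  set z : ℂ := v.1 + v.2 * Complex.I with hz_def
  have habs : ‖z‖ = norm2 v := by
    rw [hz_def, Complex.norm_add_mul_I]; rfl
  have hz0 : z ≠ 0 := by
    intro h
    rw [h, norm_zero] at habs
    exact absurd habs.symm (ne_of_gt hN0)
  set φ := Complex.arg z with hφ_def
  have hcos : Real.cos φ = v.1 / norm2 v := by
    rw [hφ_def, Complex.cos_arg hz0, habs]; simp [hz_def]
  have hsin : Real.sin φ = v.2 / norm2 v := by
    rw [hφ_def, Complex.sin_arg, habs]; simp [hz_def]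
  have hrep : ∀ θ, dot2 (uperp θ) v = norm2 v * Real.sin (θ - φ) := by
    intro θ
    rw [Real.sin_sub, hcos, hsin]
    field_simp [dot2, uperp]
    simp only [dot2, uperp]; ring
  -- subset into the sine set
  set T : Set ℝ := {x : ℝ | |Real.sin x| < a} with hT_def
  set S : Set ℝ := {θ : ℝ | |Real.sin (θ - φ)| < a} with hS_def
  have hsub : {θ : ℝ | |dot2 (uperp θ) v| < 2 * r} ⊆ S := by
    intro θ hθ
    simp only [mem_setOf_eq] at hθ ⊢
    rw [hrep θ, abs_mul, abs_of_pos hN0] at hθ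
    show |Real.sin (θ - φ)| < a
    rw [ha_def, lt_div_iff₀ hd0]
    calc |Real.sin (θ - φ)| * d ≤ |Real.sin (θ - φ)| * norm2 v := by
          exact mul_le_mul_of_nonneg_left hd (abs_nonneg _)
      _ < 2 * r := by rw [mul_comm] at hθ; exact hθ
  have hTmeas : MeasurableSet T := by
    have : Continuous fun x : ℝ => |Real.sin x| := Real.continuous_sin.abs
    exact measurableSet_lt this.measurable measurable_const
  have hSmeas : MeasurableSet S := by
    have : Continuous fun x : ℝ => |Real.sin (x - φ)| :=
      (Real.continuous_sin.comp (continuous_id.sub continuous_const)).abs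
    exact measurableSet_lt this.measurable measurable_const
  -- periodicity / fundamental domain
  haveI : VAddInvariantMeasure (AddSubgroup.zmultiples (2 * π)) ℝ volume :=
    ⟨fun c s _ => measure_preimage_add _ _ _⟩
  have h2π : 0 < 2 * π := by linarith
  have hinv : ∀ g : AddSubgroup.zmultiples (2 * π), (fun x : ℝ => g +ᵥ x) ⁻¹' T = T := by
    rintro ⟨y, hy⟩
    obtain ⟨n, hn⟩ := AddSubgroup.mem_zmultiples_iff.mp hy
    ext x
    have hsx : Real.sin (y + x) = Real.sin x := by
      rw [← hn, zsmul_eq_mul, add_comm]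
      exact Real.sin_add_int_mul_two_pi x n
    show |Real.sin ((⟨y, hy⟩ : AddSubgroup.zmultiples (2 * π)) +ᵥ x)| < a ↔ |Real.sin x| < a
    have : ((⟨y, hy⟩ : AddSubgroup.zmultiples (2 * π)) +ᵥ x) = y + x := rfl
    rw [this, hsx]
  have hfd := (isAddFundamentalDomain_Ioc h2π (-π - φ) volume).measure_set_eq
      (isAddFundamentalDomain_Ioc h2π (-π) volume) hTmeas hinv
  have e1 : -π - φ + 2 * π = π - φ := by ring
  have e2 : -π + 2 * π = π := by ring
  rw [e1, e2] at hfd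
  -- shift
  have hshift : S ∩ Ioc (-π) π = (fun θ : ℝ => θ + -φ) ⁻¹' (T ∩ Ioc (-π - φ) (π - φ)) := by
    ext θ
    simp only [hS_def, hT_def, mem_inter_iff, mem_preimage, mem_setOf_eq, mem_Ioc,
      sub_eq_add_neg]
    constructor
    · rintro ⟨h1, h2, h3⟩; exact ⟨h1, by linarith, by linarith⟩
    · rintro ⟨h1, h2, h3⟩; exact ⟨h1, by linarith, by linarith⟩
  have hvolS : volume (S ∩ Ioc (-π) π) = volume (T ∩ Ioc (-π) π) := by
    rw [hshift, measure_preimage_add_right, hfd]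
  -- final interval bound
  have hcover : T ∩ Ioc (-π) π ⊆ Ioo (-δ) δ ∪ Ioc (π - δ) π ∪ Ioc (-π) (-π + δ) := by
    rintro x ⟨hx, hx1, hx2⟩
    simp only [hT_def, mem_setOf_eq] at hx
    by_contra hcon
    simp only [mem_union, mem_Ioo, mem_Ioc, not_or, not_and_or, not_lt, not_le] at hcon
    obtain ⟨⟨hc1, hc2⟩, hc3⟩ := hcon
    have hxx : δ ≤ |x| ∧ |x| ≤ π - δ := by
      rcases le_or_gt 0 x with hx0 | hx0
      · rw [abs_of_nonneg hx0]
        rcases hc1 with h | h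
        · constructor
          · linarith
          · rcases hc2 with h' | h'
            · linarith
            · linarith
        · -- x ≥ δ case from ¬ x < δ
          constructor
          · linarith
          · rcases hc2 with h' | h'
            · linarith
            · linarith
      · rw [abs_of_neg hx0]
        rcases hc1 with h | h
        · -- x ≤ -δ
          constructor
          · linarith
          · rcases hc3 with h' | h'
            · linarith
            · linarith
        · linarith
    have hsineq : Real.sin δ ≤ |Real.sin x| := by
      have habs : Real.sin |x| = |Real.sin x| := by
        rcases le_or_gt 0 x with h | h
        · rw [abs_of_nonneg h,
            abs_of_nonneg (Real.sin_nonneg_of_nonneg_of_le_pi h (by linarith [hxx.2, abs_of_nonneg h]))]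
        · rw [abs_of_neg h, Real.sin_neg]
          rw [abs_of_nonpos (Real.sin_nonpos_of_nonpos_of_neg_pi_le h.le (by linarith))]
      rw [← habs]
      exact sin_lower hδ0 hδhalf hxx.1 hxx.2
    linarith [lt_of_lt_of_le hasin hsineq]
  have hvolT : volume (T ∩ Ioc (-π) π) ≤ ENNReal.ofReal (4 * δ) := by
    refine le_trans (measure_mono hcover) ?_
    refine le_trans (measure_union_le _ _) ?_
    refine le_trans (add_le_add (measure_union_le _ _) le_rfl) ?_
    rw [Real.volume_Ioo, Real.volume_Ioc, Real.volume_Ioc]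
    rw [← ENNReal.ofReal_add (by linarith) (by linarith),
      ← ENNReal.ofReal_add (by linarith) (by linarith)]
    apply ENNReal.ofReal_le_ofReal
    linarith
  -- Ico vs Ioc
  have hIco : volume (S ∩ Ico (-π) π) ≤ volume (S ∩ Ioc (-π) π) := by
    have : S ∩ Ico (-π) π ⊆ (S ∩ Ioc (-π) π) ∪ {-π} := by
      rintro x ⟨hxS, hx1, hx2⟩
      rcases eq_or_lt_of_le hx1 with h | h
      · right; simp [← h]
      · left; exact ⟨hxS, h, hx2.le⟩
    refine le_trans (measure_mono this) ?_
    refine le_trans (measure_union_le _ _) ?_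
    simp
  -- put everything together
  have hunif : unif {θ : ℝ | |dot2 (uperp θ) v| < 2 * r}
      ≤ ENNReal.ofReal (1 / (2 * π)) * ENNReal.ofReal (4 * δ) := by
    calc unif {θ : ℝ | |dot2 (uperp θ) v| < 2 * r} ≤ unif S := measure_mono hsub
      _ = ENNReal.ofReal (1 / (2 * π)) * volume (S ∩ Ico (-π) π) := by
          simp [unif, Measure.smul_apply, Measure.restrict_apply hSmeas, smul_eq_mul]
      _ ≤ ENNReal.ofReal (1 / (2 * π)) * ENNReal.ofReal (4 * δ) := by
          apply mul_le_mul_right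
          exact le_trans hIco (le_trans (le_of_eq hvolS) hvolT)
  refine le_trans hunif ?_
  rw [← ENNReal.ofReal_mul (by positivity)]
  apply ENNReal.ofReal_le_ofReal
  rw [hδ_def, ha_def]
  have hπne : π ≠ 0 := ne_of_gt hπ
  have hdne : d ≠ 0 := ne_of_gt hd0
  have heq : 1 / (2 * π) * (4 * (π / 3 * (2 * r / d))) = π / π * (4 * r / (3 * d)) := by
    ring
  rw [heq, div_self hπne, one_mul]

lemma unif_univ : unif (Set.univ : Set ℝ) = 1 := by
  have hπ := Real.pi_pos
  simp only [unif, Measure.smul_apply, Measure.restrict_apply MeasurableSet.univ, univ_inter,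
    Real.volume_Ico, smul_eq_mul]
  rw [← ENNReal.ofReal_mul (by positivity)]
  rw [show 1 / (2 * π) * (π - -π) = 1 by
    have hπne : π ≠ 0 := ne_of_gt hπ
    field_simp
    ring]
  exact ENNReal.ofReal_one

instance : IsFiniteMeasure unif := by
  constructor
  rw [unif_univ]
  exact ENNReal.one_lt_top

lemma pi_eval_eq (B : Set ℝ) (hB : MeasurableSet B) (t : Fin 3) :
    Measure.pi (fun _ : Fin 3 => unif) {θv : Fin 3 → ℝ | θv t ∈ B} = unif B := by
  have hset : {θv : Fin 3 → ℝ | θv t ∈ B}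
      = Set.pi univ (Function.update (fun _ : Fin 3 => (univ : Set ℝ)) t B) := by
    ext x
    simp only [mem_setOf_eq, mem_pi, mem_univ, forall_true_left]
    constructor
    · intro h s
      rcases eq_or_ne s t with rfl | hs
      · simpa [Function.update_self] using h
      · simp [Function.update_of_ne hs]
    · intro h
      simpa [Function.update_self] using h t
  rw [hset, Measure.pi_pi]
  have hval : ∀ i : Fin 3, unif (Function.update (fun _ : Fin 3 => (univ : Set ℝ)) t B i)
      = if i = t then unif B else 1 := by
    intro i
    rcases eq_or_ne i t with rfl | hi
    · simp [Function.update_self]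
    · rw [Function.update_of_ne hi, unif_univ, if_neg hi]
  rw [Finset.prod_congr rfl (fun i _ => hval i), Finset.prod_ite_eq' Finset.univ t
    (fun _ => unif B)]
  simp

/-- union bound on the probability that some pair of the `k` points has
overlapping projections (within `2r`) in some of the three random scans. -/
theorem prob_some_pair_overlaps
    (k : ℕ) (hk : 2 ≤ k) (d r : ℝ) (hr : 0 < r) (hrd : r < d / 8)
    (w : Fin k → ℝ × ℝ) (hsep : ∀ i j, i ≠ j → d ≤ norm2 (w i - w j)) :
    Measure.pi (fun _ : Fin 3 => unif)
        {θv : Fin 3 → ℝ | ∃ t : Fin 3, ∃ i j : Fin k, i ≠ j ∧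
          |dot2 (uperp (θv t)) (w i - w j)| < 2 * r}
      ≤ ENNReal.ofReal (2 * (k : ℝ) ^ 2 * r / d) := by
  have hπ := Real.pi_pos
  have hd0 : 0 < d := by linarith
  have hBmeas : ∀ i j : Fin k,
      MeasurableSet {θ : ℝ | |dot2 (uperp θ) (w i - w j)| < 2 * r} := by
    intro i j
    have hc : Continuous fun θ : ℝ => |dot2 (uperp θ) (w i - w j)| := by
      apply Continuous.abs
      simp only [dot2, uperp]
      fun_prop
    exact measurableSet_lt hc.measurable measurable_const
  have hBsymm : ∀ (u : ℝ × ℝ) (i j : Fin k),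
      |dot2 u (w j - w i)| = |dot2 u (w i - w j)| := by
    intro u i j
    have : dot2 u (w j - w i) = -dot2 u (w i - w j) := by
      simp only [dot2, Prod.fst_sub, Prod.snd_sub]
      ring
    rw [this, abs_neg]
  set c := ENNReal.ofReal (4 * r / (3 * d)) with hc_def
  set F : Fin 3 × Fin k × Fin k → Set (Fin 3 → ℝ) := fun p =>
    if p.2.2 < p.2.1 then {θv : Fin 3 → ℝ | θv p.1 ∈
      {θ : ℝ | |dot2 (uperp θ) (w p.2.1 - w p.2.2)| < 2 * r}} else ∅ with hF_def
  have hsub : {θv : Fin 3 → ℝ | ∃ t : Fin 3, ∃ i j : Fin k, i ≠ j ∧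
      |dot2 (uperp (θv t)) (w i - w j)| < 2 * r} ⊆ ⋃ p, F p := by
    rintro θv ⟨t, i, j, hij, hlt⟩
    rcases lt_or_gt_of_ne hij with h | h
    · refine mem_iUnion.2 ⟨⟨t, j, i⟩, ?_⟩
      rw [hF_def]
      simp only [if_pos h]
      show |dot2 (uperp (θv t)) (w j - w i)| < 2 * r
      rw [hBsymm]
      exact hlt
    · refine mem_iUnion.2 ⟨⟨t, i, j⟩, ?_⟩
      rw [hF_def]
      simp only [if_pos h]
      exact hlt
  refine le_trans (measure_mono hsub) (le_trans (measure_iUnion_le _) ?_)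
  have hterm : ∀ p : Fin 3 × Fin k × Fin k,
      Measure.pi (fun _ : Fin 3 => unif) (F p) ≤ (if p.2.2 < p.2.1 then c else 0) := by
    rintro ⟨t, i, j⟩
    by_cases h : j < i
    · rw [hF_def]
      simp only [if_pos h]
      rw [pi_eval_eq _ (hBmeas i j) t]
      exact unif_single _ d r hr hrd (hsep i j (ne_of_gt h))
    · rw [hF_def]
      simp only [if_neg h]
      simp
  refine le_trans (ENNReal.summable.tsum_le_tsum hterm ENNReal.summable) ?_
  rw [tsum_fintype]
  set N : ℕ := ∑ i : Fin k, (i : ℕ) with hN_def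
  have hsum : ∑ p : Fin 3 × Fin k × Fin k, (if p.2.2 < p.2.1 then c else 0)
      = (3 * N : ℕ) * c := by
    rw [Fintype.sum_prod_type]
    have h1 : (∑ q : Fin k × Fin k, if q.2 < q.1 then c else 0) = (N : ℕ) * c := by
      rw [Fintype.sum_prod_type]
      have h2 : ∀ i : Fin k, ∑ j : Fin k, (if j < i then c else 0) = ((i : ℕ) : ENNReal) * c := by
        intro i
        rw [← Finset.sum_filter (fun j : Fin k => j < i) (fun _ => c)]
        rw [show Finset.univ.filter (fun j : Fin k => j < i) = Finset.Iio i by ext j; simp]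
        rw [Finset.sum_const, Fin.card_Iio, nsmul_eq_mul]
      rw [Finset.sum_congr rfl (fun i _ => h2 i), ← Finset.sum_mul, hN_def]
      push_cast
      ring
    rw [Finset.sum_congr rfl (fun (t : Fin 3) _ => h1), Finset.sum_const]
    simp only [Finset.card_univ, Fintype.card_fin]
    rw [nsmul_eq_mul]
    push_cast
    ring
  rw [hsum]
  have hN2 : 2 * N = k * (k - 1) := by
    rw [hN_def]
    rw [show (∑ i : Fin k, (i : ℕ)) = ∑ i ∈ Finset.range k, i from
      Fin.sum_univ_eq_sum_range (fun i => i) k]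
    rw [mul_comm]
    exact Finset.sum_range_id_mul_two k
  rw [← ENNReal.ofReal_natCast (3 * N), hc_def, ← ENNReal.ofReal_mul (by positivity)]
  apply ENNReal.ofReal_le_ofReal
  have h2N : (2 * N : ℝ) = (k : ℝ) * ((k : ℝ) - 1) := by
    have := congrArg (Nat.cast : ℕ → ℝ) hN2
    push_cast [Nat.cast_sub (by omega : 1 ≤ k)] at this
    linarith
  have hkr : (2 : ℝ) ≤ (k : ℝ) := by exact_mod_cast hk
  have hd' : d ≠ 0 := ne_of_gt hd0
  have e : ((3 * N : ℕ) : ℝ) * (4 * r / (3 * d)) = 4 * (N : ℝ) * r / d := by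
    push_cast
    field_simp
  rw [e, div_le_div_iff₀ hd0 hd0]
  nlinarith [mul_nonneg (mul_nonneg (by positivity : (0:ℝ) ≤ 2 * (k:ℝ)) hr.le) hd0.le]
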